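/- (Theorem 1, finite-group version, combined statement: P-symmetry of the distribution D.) The following four equalities hold simultaneously for all (x,u,y,v,z) ∈ A⁵: (i) ∑_{y′,v′,z′ ∈ A} T(y,y′)·conj(T(v,v′))·T(z,z′)·D(u,x,y′,v′,z′) = conj(D(x,u,y,v,z)); (ii) (1/|A|)·∑_{x′,v′,z′ ∈ A} T(x,x′)·conj(S(v,v′))·S(z,z′)·D(x′,y,u,v′,z′) = conj(D(x,u,y,v,z)); (iii) (1/|A|)·∑_{x′,u′,z′ ∈ A} S(x,x′)·conj(S(u,u′))·T(z,z′)·D(x′,u′,v,y,z′) = conj(D(x,u,y,v,z)); (iv) ∑_{x′,u′,y′ ∈ A} T(x,x′)·conj(T(u,u′))·T(y,y′)·D(x′,u′,y′,z,v) = conj(D(x,u,y,v,z)). -/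

import Mathlib

open Finset

set_option maxHeartbeats 1000000 in
/-- Theorem 1, finite-group version, combined statement: the distribution `D` is
P-symmetric, i.e. all four symmetry relations hold simultaneously. -/
theorem pachner_P_symmetry_combined
    {A : Type*} [AddCommGroup A] [Fintype A] [DecidableEq A]
    (g : A → ℂ) (hg_abs : ∀ x, ‖g x‖ = 1) (hg_sym : ∀ x, g (-x) = g x)
    (χ : A → A → ℂ) (hχ : ∀ x y, χ x y = g x * g y * (g (x + y))⁻¹)
    (hχ_add : ∀ x x' y, χ (x + x') y = χ x y * χ x' y)
    (hχ_nondeg : ∀ x : A, x ≠ 0 → ∃ y : A, χ x y ≠ 1)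
    (δ : A → ℂ) (hδ : ∀ a, δ a = if a = 0 then 1 else 0)
    (D : A → A → A → A → A → ℂ)
    (hD : ∀ x u y v z, D x u y v z = χ x z * δ (x - u + y) * δ (y - v + z))
    (T : A → A → ℂ) (hT : ∀ x y, T x y = δ (x + y) * g x)
    (S : A → A → ℂ) (hS : ∀ x y, S x y = g (x - y)) :
    (∀ x u y v z : A,
        ∑ y' : A, ∑ v' : A, ∑ z' : A,
            T y y' * (starRingEnd ℂ) (T v v') * T z z' * D u x y' v' z'
          = (starRingEnd ℂ) (D x u y v z)) ∧
    (∀ x u y v z : A,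
        (Fintype.card A : ℂ)⁻¹ *
            ∑ x' : A, ∑ v' : A, ∑ z' : A,
              T x x' * (starRingEnd ℂ) (S v v') * S z z' * D x' y u v' z'
          = (starRingEnd ℂ) (D x u y v z)) ∧
    (∀ x u y v z : A,
        (Fintype.card A : ℂ)⁻¹ *
            ∑ x' : A, ∑ u' : A, ∑ z' : A,
              S x x' * (starRingEnd ℂ) (S u u') * T z z' * D x' u' v y z'
          = (starRingEnd ℂ) (D x u y v z)) ∧
    (∀ x u y v z : A,
        ∑ x' : A, ∑ u' : A, ∑ y' : A,
            T x x' * (starRingEnd ℂ) (T u u') * T y y' * D x' u' y' z v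
          = (starRingEnd ℂ) (D x u y v z)) := by
  classical
  have hgne : ∀ x : A, g x ≠ 0 := by
    intro x h
    have := hg_abs x
    rw [h] at this; simp at this
  have hgc : ∀ x : A, (starRingEnd ℂ) (g x) = (g x)⁻¹ := by
    intro x; rw [← Complex.inv_eq_conj (by exact hg_abs x)]
  have hχne : ∀ p q : A, χ p q ≠ 0 := by
    intro p q; rw [hχ]
    exact mul_ne_zero (mul_ne_zero (hgne p) (hgne q)) (inv_ne_zero (hgne _))
  have hχsymm : ∀ p q : A, χ p q = χ q p := by
    intro p q; rw [hχ, hχ, add_comm p q]; ring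
  have hg0 : g 0 = 1 := by
    have h1 : χ 0 0 = g 0 := by rw [hχ, add_zero]; field_simp
    have h2 : χ (0 + 0) 0 = χ 0 0 * χ 0 0 := hχ_add 0 0 0
    rw [add_zero, h1] at h2
    have h3 : g 0 * 1 = g 0 * g 0 := by rw [mul_one]; exact h2
    exact (mul_left_cancel₀ (hgne 0) h3).symm
  have hχ01 : ∀ q : A, χ 0 q = 1 := by
    intro q; rw [hχ, hg0, zero_add, one_mul, mul_inv_cancel₀ (hgne q)]
  have hχneg1 : ∀ p q : A, χ (-p) q = (χ p q)⁻¹ := by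
    intro p q
    have h := hχ_add p (-p) q
    rw [add_neg_cancel, hχ01] at h
    exact eq_inv_of_mul_eq_one_right h.symm
  have hχadd2 : ∀ p q r : A, χ p (q + r) = χ p q * χ p r := by
    intro p q r
    rw [hχsymm p (q + r), hχ_add q r p, ← hχsymm p q, ← hχsymm p r]
  have hχneg2 : ∀ p q : A, χ p (-q) = (χ p q)⁻¹ := by
    intro p q; rw [hχsymm, hχneg1, hχsymm]
  have hχconj : ∀ p q : A, (starRingEnd ℂ) (χ p q) = (χ p q)⁻¹ := by
    intro p q; rw [hχ, map_mul, map_mul, map_inv₀, hgc, hgc, hgc]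
    rw [mul_inv, mul_inv, inv_inv]
  have hgsub : ∀ p q : A, g (p - q) = g p * g q * χ p q := by
    intro p q
    have h := hχ p (-q)
    rw [hχneg2, hg_sym, ← sub_eq_add_neg] at h
    field_simp [hχne p q, hgne (p - q)] at h
    linear_combination h
  have horth : ∀ b : A, ∑ w : A, χ b w = if b = 0 then (Fintype.card A : ℂ) else 0 := by
    intro b
    by_cases hb : b = 0
    · simp [hb, hχ01]
    · rw [if_neg hb]
      obtain ⟨y0, hy0⟩ := hχ_nondeg b hb
      have h1 : ∑ w : A, χ b (w + y0) = ∑ w : A, χ b w :=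
        Equiv.sum_comp (Equiv.addRight y0) (χ b)
      have h2 : ∑ w : A, χ b (w + y0) = (∑ w : A, χ b w) * χ b y0 := by
        rw [Finset.sum_mul]; exact Finset.sum_congr rfl fun w _ => hχadd2 b w y0
      have h3 : (∑ w : A, χ b w) * (χ b y0 - 1) = 0 := by
        rw [mul_sub, mul_one, ← h2, h1, sub_self]
      rcases mul_eq_zero.mp h3 with h | h
      · exact h
      · exact absurd (by linear_combination h) hy0
  have hδ0 : δ 0 = 1 := by rw [hδ, if_pos rfl]
  have hδne : ∀ t : A, t ≠ 0 → δ t = 0 := fun t h => by rw [hδ, if_neg h]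
  have hδconj : ∀ t : A, (starRingEnd ℂ) (δ t) = δ t := by
    intro t; rw [hδ]; split <;> simp

  have hTval : ∀ p : A, T p (-p) = g p := by
    intro p; rw [hT, add_neg_cancel, hδ0, one_mul]
  have hTne : ∀ p q : A, q ≠ -p → T p q = 0 := by
    intro p q h
    rw [hT, hδne _ (fun hc => h (eq_neg_of_add_eq_zero_right hc)), zero_mul]
  have hcard : (Fintype.card A : ℂ) ≠ 0 := Nat.cast_ne_zero.mpr Fintype.card_ne_zero
  have hsum_neg : ∀ b : A, ∑ w : A, χ b (-w) = ∑ w : A, χ b w := fun b =>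
    Equiv.sum_comp (Equiv.neg A) (χ b)
  have hkey2 : ∀ a c zz w : A,
      (starRingEnd ℂ) (g (a - w)) * g (zz - w) * χ (-c) w
        = (starRingEnd ℂ) (g a) * g zz * χ (a - zz + c) (-w) := by
    intro a c zz w
    rw [hgsub a w, hgsub zz w, map_mul, map_mul, hgc, hgc, hχconj, hχneg1, hχneg2,
      show a - zz + c = a + -zz + c from by rw [sub_eq_add_neg], hχ_add, hχ_add, hχneg1]
    field_simp [hgne a, hgne w, hgne zz, hχne a w, hχne zz w, hχne c w]
  refine ⟨?_, ?_, ?_, ?_⟩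
  · -- part (i)
    intro x u y v z
    have h1 : ∀ b : A, b ≠ -y →
        (∑ v' : A, ∑ z' : A, T y b * (starRingEnd ℂ) (T v v') * T z z' * D u x b v' z') = 0 :=
      fun b hb => Finset.sum_eq_zero fun v' _ => Finset.sum_eq_zero fun z' _ => by
        rw [hTne y b hb, zero_mul, zero_mul, zero_mul]
    rw [Fintype.sum_eq_single (-y) h1]
    have h2 : ∀ b : A, b ≠ -v →
        (∑ z' : A, T y (-y) * (starRingEnd ℂ) (T v b) * T z z' * D u x (-y) b z') = 0 :=
      fun b hb => Finset.sum_eq_zero fun z' _ => by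
        rw [hTne v b hb, map_zero, mul_zero, zero_mul, zero_mul]
    rw [Fintype.sum_eq_single (-v) h2]
    have h3 : ∀ b : A, b ≠ -z →
        T y (-y) * (starRingEnd ℂ) (T v (-v)) * T z b * D u x (-y) (-v) b = 0 :=
      fun b hb => by rw [hTne z b hb, mul_zero, zero_mul]
    rw [Fintype.sum_eq_single (-z) h3]
    rw [hTval, hTval, hTval, hgc, hD, hD, map_mul, map_mul, hδconj, hδconj, hχconj]
    by_cases h1' : x - u + y = 0
    · by_cases h2' : y - v + z = 0
      · have hu : u = x + y := by
          have h := h1'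
          rw [show x - u + y = (x + y) - u from by abel] at h
          exact (sub_eq_zero.mp h).symm
        have hv : v = y + z := by
          have h := h2'
          rw [show y - v + z = (y + z) - v from by abel] at h
          exact (sub_eq_zero.mp h).symm
        subst hu; subst hv
        rw [show (x + y) - x + -y = (0:A) from by abel,
          show -y - -(y + z) + -z = (0:A) from by abel,
          show x - (x + y) + y = (0:A) from by abel,
          show y - (y + z) + z = (0:A) from by abel, hδ0]
        rw [hχneg2, hχ_add, hχ y z]
        field_simp [hgne y, hgne z, hgne (y + z), hχne x z]
      · rw [hδne _ h2', hδne (-y - -v + -z)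
          (fun hc => h2' (by rw [show y - v + z = -(-y - -v + -z) from by abel, hc, neg_zero]))]
        ring
    · rw [hδne _ h1', hδne (u - x + -y)
        (fun hc => h1' (by rw [show x - u + y = -(u - x + -y) from by abel, hc, neg_zero]))]
      ring
  · -- part (ii)
    intro x u y v z
    have h1 : ∀ b : A, b ≠ -x →
        (∑ v' : A, ∑ z' : A, T x b * (starRingEnd ℂ) (S v v') * S z z' * D b y u v' z') = 0 :=
      fun b hb => Finset.sum_eq_zero fun v' _ => Finset.sum_eq_zero fun z' _ => by
        rw [hTne x b hb, zero_mul, zero_mul, zero_mul]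
    rw [Fintype.sum_eq_single (-x) h1, Finset.sum_comm]
    have h2 : ∀ z' : A, ∀ b : A, b ≠ u + z' →
        T x (-x) * (starRingEnd ℂ) (S v b) * S z z' * D (-x) y u b z' = 0 := by
      intro z' b hb
      rw [hD, hδne (u - b + z')
        (fun hc => hb (by
          rw [show u - b + z' = (u + z') - b from by abel] at hc
          exact (sub_eq_zero.mp hc).symm)), mul_zero, mul_zero]
    rw [show (∑ z' : A, ∑ v' : A,
          T x (-x) * (starRingEnd ℂ) (S v v') * S z z' * D (-x) y u v' z')
        = ∑ z' : A, T x (-x) * (starRingEnd ℂ) (S v (u + z')) * S z z' * D (-x) y u (u + z') z'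
      from Finset.sum_congr rfl fun z' _ => Fintype.sum_eq_single _ (h2 z')]
    have step : (∑ z' : A,
          T x (-x) * (starRingEnd ℂ) (S v (u + z')) * S z z' * D (-x) y u (u + z') z')
        = (g x * δ (-x - y + u) * ((starRingEnd ℂ) (g (v - u)) * g z)) *
            ∑ z' : A, χ (v - u - z + x) (-z') := by
      rw [Finset.mul_sum]
      refine Finset.sum_congr rfl fun z' _ => ?_
      rw [hTval, hS, hS, hD, show u - (u + z') + z' = (0:A) from by abel, hδ0,
        show v - (u + z') = (v - u) - z' from by abel]
      have h := hkey2 (v - u) x z z'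
      linear_combination (g x * δ (-x - y + u)) * h
    rw [step, hsum_neg, horth, hD, map_mul, map_mul, hχconj, hδconj, hδconj]
    by_cases h1' : x - u + y = 0
    · have hu : u = x + y := by
        have h := h1'
        rw [show x - u + y = (x + y) - u from by abel] at h
        exact (sub_eq_zero.mp h).symm
      subst hu
      by_cases h2' : y - v + z = 0
      · have hv : v = y + z := by
          have h := h2'
          rw [show y - v + z = (y + z) - v from by abel] at h
          exact (sub_eq_zero.mp h).symm
        subst hv
        rw [if_pos (show (y + z) - (x + y) - z + x = (0:A) from by abel),
          show -x - y + (x + y) = (0:A) from by abel,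
          show x - (x + y) + y = (0:A) from by abel,
          show y - (y + z) + z = (0:A) from by abel, hδ0,
          show (y + z) - (x + y) = z - x from by abel, hgc, hgsub z x, hχsymm z x]
        field_simp [hgne x, hgne z, hχne x z]
      · rw [if_neg (fun hc : v - (x + y) - z + x = 0 => h2'
          (by rw [show y - v + z = -(v - (x + y) - z + x) from by abel, hc, neg_zero])),
          hδne _ h2']
        ring
    · rw [hδne _ h1', hδne (-x - y + u)
        (fun hc => h1' (by rw [show x - u + y = -(-x - y + u) from by abel, hc, neg_zero]))]
      ring
  · -- part (iii)
    intro x u y v z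
    have h3 : ∀ x' u' : A, ∀ b : A, b ≠ -z →
        S x x' * (starRingEnd ℂ) (S u u') * T z b * D x' u' v y b = 0 :=
      fun x' u' b hb => by rw [hTne z b hb, mul_zero, zero_mul]
    rw [show (∑ x' : A, ∑ u' : A, ∑ z' : A,
          S x x' * (starRingEnd ℂ) (S u u') * T z z' * D x' u' v y z')
        = ∑ x' : A, ∑ u' : A, S x x' * (starRingEnd ℂ) (S u u') * T z (-z) * D x' u' v y (-z)
      from Finset.sum_congr rfl fun x' _ => Finset.sum_congr rfl fun u' _ =>
        Fintype.sum_eq_single _ (h3 x' u')]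
    have h4 : ∀ x' : A, ∀ b : A, b ≠ x' + v →
        S x x' * (starRingEnd ℂ) (S u b) * T z (-z) * D x' b v y (-z) = 0 := by
      intro x' b hb
      rw [hD, hδne (x' - b + v)
        (fun hc => hb (by
          rw [show x' - b + v = (x' + v) - b from by abel] at hc
          exact (sub_eq_zero.mp hc).symm)), mul_zero, zero_mul, mul_zero]
    rw [show (∑ x' : A, ∑ u' : A,
          S x x' * (starRingEnd ℂ) (S u u') * T z (-z) * D x' u' v y (-z))
        = ∑ x' : A, S x x' * (starRingEnd ℂ) (S u (x' + v)) * T z (-z) * D x' (x' + v) v y (-z)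
      from Finset.sum_congr rfl fun x' _ => Fintype.sum_eq_single _ (h4 x')]
    have step : (∑ x' : A,
          S x x' * (starRingEnd ℂ) (S u (x' + v)) * T z (-z) * D x' (x' + v) v y (-z))
        = (g z * δ (v - y + -z) * ((starRingEnd ℂ) (g (u - v)) * g x)) *
            ∑ x' : A, χ (u - v - x + z) (-x') := by
      rw [Finset.mul_sum]
      refine Finset.sum_congr rfl fun x' _ => ?_
      rw [hTval, hS, hS, hD, show x' - (x' + v) + v = (0:A) from by abel, hδ0,
        show u - (x' + v) = (u - v) - x' from by abel, hχsymm x' (-z)]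
      have h := hkey2 (u - v) z x x'
      linear_combination (g z * δ (v - y + -z)) * h
    rw [step, hsum_neg, horth, hD, map_mul, map_mul, hχconj, hδconj, hδconj]
    by_cases h2' : y - v + z = 0
    · have hv : v = y + z := by
        have h := h2'
        rw [show y - v + z = (y + z) - v from by abel] at h
        exact (sub_eq_zero.mp h).symm
      subst hv
      by_cases h1' : x - u + y = 0
      · have hu : u = x + y := by
          have h := h1'
          rw [show x - u + y = (x + y) - u from by abel] at h
          exact (sub_eq_zero.mp h).symm
        subst hu
        rw [if_pos (show (x + y) - (y + z) - x + z = (0:A) from by abel),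
          show (y + z) - y + -z = (0:A) from by abel,
          show x - (x + y) + y = (0:A) from by abel,
          show y - (y + z) + z = (0:A) from by abel, hδ0,
          show (x + y) - (y + z) = x - z from by abel, hgc, hgsub x z]
        field_simp [hgne x, hgne z, hχne x z]
      · rw [if_neg (fun hc : u - (y + z) - x + z = 0 => h1'
          (by rw [show x - u + y = -(u - (y + z) - x + z) from by abel, hc, neg_zero])),
          hδne _ h1']
        ring
    · rw [hδne _ h2', hδne (v - y + -z)
        (fun hc => h2' (by rw [show y - v + z = -(v - y + -z) from by abel, hc, neg_zero]))]
      ring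
  · -- part (iv)
    intro x u y v z
    have h1 : ∀ b : A, b ≠ -x →
        (∑ u' : A, ∑ y' : A, T x b * (starRingEnd ℂ) (T u u') * T y y' * D b u' y' z v) = 0 :=
      fun b hb => Finset.sum_eq_zero fun u' _ => Finset.sum_eq_zero fun y' _ => by
        rw [hTne x b hb, zero_mul, zero_mul, zero_mul]
    rw [Fintype.sum_eq_single (-x) h1]
    have h2 : ∀ b : A, b ≠ -u →
        (∑ y' : A, T x (-x) * (starRingEnd ℂ) (T u b) * T y y' * D (-x) b y' z v) = 0 :=
      fun b hb => Finset.sum_eq_zero fun y' _ => by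
        rw [hTne u b hb, map_zero, mul_zero, zero_mul, zero_mul]
    rw [Fintype.sum_eq_single (-u) h2]
    have h3 : ∀ b : A, b ≠ -y →
        T x (-x) * (starRingEnd ℂ) (T u (-u)) * T y b * D (-x) (-u) b z v = 0 :=
      fun b hb => by rw [hTne y b hb, mul_zero, zero_mul]
    rw [Fintype.sum_eq_single (-y) h3]
    rw [hTval, hTval, hTval, hgc, hD, hD, map_mul, map_mul, hδconj, hδconj, hχconj]
    by_cases h1' : x - u + y = 0
    · by_cases h2' : y - v + z = 0
      · have hu : u = x + y := by
          have h := h1'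
          rw [show x - u + y = (x + y) - u from by abel] at h
          exact (sub_eq_zero.mp h).symm
        have hv : v = y + z := by
          have h := h2'
          rw [show y - v + z = (y + z) - v from by abel] at h
          exact (sub_eq_zero.mp h).symm
        subst hu; subst hv
        rw [show -x - -(x + y) + -y = (0:A) from by abel,
          show -y - z + (y + z) = (0:A) from by abel,
          show x - (x + y) + y = (0:A) from by abel,
          show y - (y + z) + z = (0:A) from by abel, hδ0]
        rw [hχneg1, hχadd2, hχ x y]
        field_simp [hgne x, hgne y, hgne (x + y), hχne x z]
      · rw [hδne _ h2', hδne (-y - z + v)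
          (fun hc => h2' (by rw [show y - v + z = -(-y - z + v) from by abel, hc, neg_zero]))]
        ring
    · rw [hδne _ h1', hδne (-x - -u + -y)
        (fun hc => h1' (by rw [show x - u + y = -(-x - -u + -y) from by abel, hc, neg_zero]))]
      ring
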